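/- Let n₁ ≥ 1, K = 1, and let (λ₁,…,λ_{n₁}, μ₁,…,μ_{n₁}) be a real-analytic solution of the system (ODE) on an open interval I with τ ≡ 0 on I. Then there exist real constants a₁,…,a_{n₁} and c₁,…,c_{n₁} such that for each i, the function t + cᵢ avoids π/2 + πℤ on I, μᵢ(t) = tan(t + cᵢ) and λᵢ(t) = aᵢ/cos(t + cᵢ); moreover the constants can be chosen so that for every index k, the sum of aᵢ over all indices i with cᵢ = c_k equals 0. -/

import Mathlib

open scoped Classical

private lemma const_of_deriv0 {I : Set ℝ} (hI : IsOpen I) (hc : Convex ℝ I)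
    {f : ℝ → ℝ} (hf : ∀ t ∈ I, HasDerivAt f 0 t) {x y : ℝ} (hx : x ∈ I) (hy : y ∈ I) :
    f x = f y := by
  refine hc.is_const_of_fderivWithin_eq_zero
    (fun t ht => (hf t ht).differentiableAt.differentiableWithinAt) (fun t ht => ?_) hx hy
  rw [fderivWithin_of_isOpen hI ht, (hf t ht).hasFDerivAt.fderiv]
  ext; simp

private lemma analyticOnNhd_cos_shift (c : ℝ) :
    AnalyticOnNhd ℝ (fun t : ℝ => Real.cos (t + c)) Set.univ := by
  have h : (fun t : ℝ => Real.cos (t + c))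
      = fun t : ℝ => Complex.reCLM (Complex.cos (Complex.ofRealCLM (t + c))) := by
    funext t
    simp [← Complex.ofReal_add, Complex.cos_ofReal_re]
  rw [h]
  intro x _
  exact (Complex.reCLM.analyticAt _).comp
    (((Complex.differentiable_cos.analyticAt _).restrictScalars).comp
      ((Complex.ofRealCLM.analyticAt _).comp ((analyticAt_id).add analyticAt_const)))

/-- Classification of solutions of the ODE system with `K = 1` and `τ ≡ 0`. -/
theorem stmt_3 (n₁ : ℕ) (hn : 1 ≤ n₁) (K : ℝ) (hK : K = 1)
    (I : Set ℝ) (hI : IsOpen I) (hIconn : I.OrdConnected)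
    (lam mu : Fin n₁ → ℝ → ℝ)
    (hlam : ∀ i, AnalyticOnNhd ℝ (lam i) I)
    (hmu : ∀ i, AnalyticOnNhd ℝ (mu i) I)
    (tau : ℝ → ℝ) (htau : ∀ t, tau t = (2/3) * ∑ i, lam i t)
    (hode1 : ∀ i, ∀ t ∈ I, HasDerivAt (lam i) ((tau t / 2 + lam i t) * mu i t) t)
    (hode2 : ∀ i, ∀ t ∈ I,
      HasDerivAt (mu i) ((mu i t) ^ 2 - tau t / 2 * lam i t + K) t)
    (hode3 : ∀ t ∈ I,
      -(deriv (deriv tau) t) + deriv tau t * (∑ i, mu i t)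
        + tau t * ((tau t) ^ 2 / 4 - ((n₁ : ℝ) + 1) * K + ∑ i, (lam i t) ^ 2) = 0)
    (htau0 : ∀ t ∈ I, tau t = 0) :
    ∃ a c : Fin n₁ → ℝ,
      (∀ i,
        (∀ t ∈ I, ∀ m : ℤ, t + c i ≠ Real.pi / 2 + m * Real.pi) ∧
        (∀ t ∈ I,
          mu i t = Real.tan (t + c i) ∧ lam i t = a i / Real.cos (t + c i))) ∧
      (∀ k : Fin n₁,
        (∑ i ∈ Finset.univ.filter (fun i => c i = c k), a i) = 0) := by
  rcases Set.eq_empty_or_nonempty I with hIe | ⟨t₀, ht₀⟩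
  · subst hIe
    exact ⟨0, 0, fun i => ⟨fun t ht => absurd ht (Set.notMem_empty t),
      fun t ht => absurd ht (Set.notMem_empty t)⟩, fun k => by simp⟩
  have hconv : Convex ℝ I := convex_iff_ordConnected.mpr hIconn
  set c : Fin n₁ → ℝ := fun i => Real.arctan (mu i t₀) - t₀ with hc
  have harct : ∀ i, ∀ t ∈ I, Real.arctan (mu i t) = t + c i := by
    intro i t ht
    have key : ∀ s ∈ I, HasDerivAt (fun u => Real.arctan (mu i u) - u) 0 s := by
      intro s hs
      have hmu' : HasDerivAt (mu i) ((mu i s) ^ 2 + 1) s := by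
        have h := hode2 i s hs; rw [htau0 s hs, hK] at h; simpa using h
      have h1 : HasDerivAt (fun u => Real.arctan (mu i u))
          ((1 / (1 + (mu i s) ^ 2)) * ((mu i s) ^ 2 + 1)) s :=
        (Real.hasDerivAt_arctan (mu i s)).comp s hmu'
      have h2 := h1.sub (hasDerivAt_id s)
      have h3 : (1 / (1 + (mu i s) ^ 2)) * ((mu i s) ^ 2 + 1) - 1 = 0 := by
        have h0 : (1 : ℝ) + (mu i s) ^ 2 ≠ 0 := by positivity
        field_simp
        all_goals ring
      rwa [h3] at h2
    have h := const_of_deriv0 hI hconv key ht ht₀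
    simp only [hc]
    linarith
  have hrange : ∀ i, ∀ t ∈ I, t + c i ∈ Set.Ioo (-(Real.pi / 2)) (Real.pi / 2) := by
    intro i t ht; rw [← harct i t ht]; exact Real.arctan_mem_Ioo _
  have hcos : ∀ i, ∀ t ∈ I, 0 < Real.cos (t + c i) := fun i t ht =>
    Real.cos_pos_of_mem_Ioo (hrange i t ht)
  have hmut : ∀ i, ∀ t ∈ I, mu i t = Real.tan (t + c i) := by
    intro i t ht; rw [← harct i t ht, Real.tan_arctan]
  set a : Fin n₁ → ℝ := fun i => lam i t₀ * Real.cos (t₀ + c i) with ha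
  have hlamc : ∀ i, ∀ t ∈ I, lam i t * Real.cos (t + c i) = a i := by
    intro i t ht
    have key : ∀ s ∈ I, HasDerivAt (fun u => lam i u * Real.cos (u + c i)) 0 s := by
      intro s hs
      have hl : HasDerivAt (lam i) (lam i s * mu i s) s := by
        have h := hode1 i s hs; rw [htau0 s hs] at h; simpa using h
      have hcosd : HasDerivAt (fun u => Real.cos (u + c i)) (-Real.sin (s + c i)) s := by
        have h1 : HasDerivAt (fun u : ℝ => u + c i) 1 s := (hasDerivAt_id s).add_const _
        have h2 := (Real.hasDerivAt_cos (s + c i)).comp s h1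
        rw [mul_one] at h2
        exact h2
      have h := hl.mul hcosd
      refine h.congr_deriv ?_
      rw [hmut i s hs, Real.tan_eq_sin_div_cos]
      have hne := (hcos i s hs).ne'
      field_simp
      all_goals ring
    exact const_of_deriv0 hI hconv key ht ht₀
  have hsum0 : ∀ t ∈ I, (∑ i, lam i t) = 0 := by
    intro t ht
    have h := htau0 t ht
    rw [htau] at h
    linarith
  refine ⟨a, c, fun i => ⟨?_, ?_⟩, ?_⟩
  · intro t ht m heq
    rcases hrange i t ht with ⟨h1, h2⟩
    rcases le_or_gt 0 m with hm | hm
    · have h3 : (0 : ℝ) ≤ m * Real.pi :=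
        mul_nonneg (by exact_mod_cast hm) Real.pi_pos.le
      rw [heq] at h2
      linarith
    · have hm1 : (m : ℝ) ≤ -1 := by exact_mod_cast (by omega : m ≤ -1)
      have h3 : (m : ℝ) * Real.pi ≤ -Real.pi := by nlinarith [Real.pi_pos]
      rw [heq] at h1
      linarith
  · intro t ht
    refine ⟨hmut i t ht, ?_⟩
    have := hlamc i t ht
    field_simp [(hcos i t ht).ne']
    linarith
  · intro k
    set S : Finset (Fin n₁) := Finset.univ.filter (fun i => ¬ c i = c k) with hS
    set A : ℝ := ∑ i ∈ Finset.univ.filter (fun i => c i = c k), a i with hA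
    set H : ℝ → ℝ := fun t =>
      A * ∏ j ∈ S, Real.cos (t + c j)
        + ∑ i ∈ S, a i * (Real.cos (t + c k) * ∏ j ∈ S.erase i, Real.cos (t + c j))
      with hH
    have hHanal : AnalyticOnNhd ℝ H Set.univ := by
      apply AnalyticOnNhd.add
      · exact analyticOnNhd_const.mul
          (Finset.analyticOnNhd_fun_prod S (fun j _ => analyticOnNhd_cos_shift (c j)))
      · exact Finset.analyticOnNhd_fun_sum S (fun i _ =>
          analyticOnNhd_const.mul ((analyticOnNhd_cos_shift (c k)).mul
            (Finset.analyticOnNhd_fun_prod _ (fun j _ => analyticOnNhd_cos_shift (c j)))))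
    have hH0 : ∀ t ∈ I, H t = 0 := by
      intro t ht
      have key : H t = (∑ i, lam i t) * (Real.cos (t + c k) * ∏ j ∈ S, Real.cos (t + c j)) := by
        rw [Finset.sum_mul]
        rw [← Finset.sum_filter_add_sum_filter_not Finset.univ (fun i => c i = c k)
          (fun i => lam i t * (Real.cos (t + c k) * ∏ j ∈ S, Real.cos (t + c j)))]
        simp only [hH]
        congr 1
        · rw [hA, Finset.sum_mul]
          apply Finset.sum_congr rfl
          intro i hi
          have hik : c i = c k := (Finset.mem_filter.mp hi).2
          rw [← hik]
          have hl := hlamc i t ht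
          rw [← mul_assoc, hl]
        · apply Finset.sum_congr rfl
          intro i hi
          have hiS : i ∈ S := hi
          have hprod : Real.cos (t + c i) * ∏ j ∈ S.erase i, Real.cos (t + c j)
              = ∏ j ∈ S, Real.cos (t + c j) :=
            Finset.mul_prod_erase S (fun j => Real.cos (t + c j)) hiS
          have hl := hlamc i t ht
          rw [← hprod, ← hl]
          ring
      rw [key, hsum0 t ht, zero_mul]
    have hHzero : Set.EqOn H 0 Set.univ := by
      apply hHanal.eqOn_zero_of_preconnected_of_eventuallyEq_zero isPreconnected_univ
        (Set.mem_univ t₀)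
      filter_upwards [hI.mem_nhds ht₀] with t ht using hH0 t ht
    have hval := hHzero (Set.mem_univ (Real.pi / 2 - c k))
    simp only [hH, Pi.zero_apply] at hval
    have hck : Real.cos (Real.pi / 2 - c k + c k) = 0 := by
      rw [show Real.pi / 2 - c k + c k = Real.pi / 2 by ring, Real.cos_pi_div_two]
    rw [hck] at hval
    simp only [zero_mul, mul_zero, Finset.sum_const_zero, add_zero] at hval
    have hprodne : (∏ j ∈ S, Real.cos (Real.pi / 2 - c k + c j)) ≠ 0 := by
      rw [Finset.prod_ne_zero_iff]
      intro j hj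
      have hjk : c j ≠ c k := by
        have := (Finset.mem_filter.mp hj).2; exact this
      have hcj := Real.arctan_mem_Ioo (mu j t₀)
      have hck' := Real.arctan_mem_Ioo (mu k t₀)
      have hdiff : c k - c j ∈ Set.Ioo (-Real.pi) Real.pi := by
        simp only [hc]
        constructor
        · rcases hcj with ⟨a1, a2⟩; rcases hck' with ⟨b1, b2⟩; linarith
        · rcases hcj with ⟨a1, a2⟩; rcases hck' with ⟨b1, b2⟩; linarith
      rw [show Real.pi / 2 - c k + c j = Real.pi / 2 - (c k - c j) by ring,
        Real.cos_pi_div_two_sub]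
      rw [Ne, Real.sin_eq_zero_iff_of_lt_of_lt hdiff.1 hdiff.2]
      intro h
      exact hjk (sub_eq_zero.mp h).symm
    have hA0 : A = 0 := by
      rcases mul_eq_zero.mp hval with h | h
      · exact h
      · exact absurd h hprodne
    exact hA0
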